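/- There exist elements u, v of PGL₂(𝔽₁₃) satisfying u² = v¹³ = (u·v²)⁴ = (u·v·u·v⁴)² = 1 that generate PGL₂(𝔽₁₃). -/

import Mathlib

open Matrix MatrixGroups

namespace Stmt12Aux

local instance : Fact (Nat.Prime 13) := ⟨by norm_num⟩

abbrev G := GL (Fin 2) (ZMod 13)
abbrev Q := G ⧸ Subgroup.center G

def U : G := ⟨!![0,1;6,0], !![0,11;1,0], by decide, by decide⟩
def V : G := ⟨!![1,1;0,1], !![1,12;0,1], by decide, by decide⟩
def Wl : G := ⟨!![1,0;6,1], !![1,0;7,1], by decide, by decide⟩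
def Wd : G := ⟨!![7,0;0,10], !![2,0;0,4], by decide, by decide⟩

lemma central_of_scalar (s : ZMod 13) (g : G)
    (h : (↑g : Matrix (Fin 2) (Fin 2) (ZMod 13)) = s • 1) :
    g ∈ Subgroup.center G := by
  rw [Subgroup.mem_center_iff]
  intro m
  ext : 1
  simp only [Units.val_mul, h, smul_mul_assoc, mul_smul_comm, one_mul, mul_one]

def u : Q := QuotientGroup.mk U
def v : Q := QuotientGroup.mk V

abbrev H : Subgroup Q := Subgroup.closure {u, v}

lemma hu : u ∈ H := Subgroup.subset_closure (by left; rfl)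
lemma hv : v ∈ H := Subgroup.subset_closure (by right; rfl)

lemma hWl : Wl = U * V * U⁻¹ := Units.ext (by decide)
lemma hWd : Wd = U * V * U * V * V * U * V := Units.ext (by decide)

lemma hWlH : (QuotientGroup.mk Wl : Q) ∈ H := by
  rw [hWl]
  simp only [QuotientGroup.mk_mul, QuotientGroup.mk_inv]
  exact mul_mem (mul_mem hu hv) (inv_mem hu)

lemma hWdH : (QuotientGroup.mk Wd : Q) ∈ H := by
  rw [hWd]
  simp only [QuotientGroup.mk_mul]
  exact mul_mem (mul_mem (mul_mem (mul_mem (mul_mem (mul_mem hu hv) hu) hv) hv) hu) hv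

lemma hVpow (n : ℕ) : (↑(V ^ n) : Matrix (Fin 2) (Fin 2) (ZMod 13)) = !![1,(n:ZMod 13);0,1] := by
  induction n with
  | zero => simp; decide
  | succ n ih =>
    rw [pow_succ, Units.val_mul, ih]
    rw [show (↑V : Matrix (Fin 2) (Fin 2) (ZMod 13)) = !![1,1;0,1] from rfl,
      Matrix.mul_fin_two]
    ext a b
    fin_cases a <;> fin_cases b <;> push_cast <;> simp <;> ring

lemma hWlpow (n : ℕ) :
    (↑(Wl ^ n) : Matrix (Fin 2) (Fin 2) (ZMod 13)) = !![1,0;6*(n:ZMod 13),1] := by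
  induction n with
  | zero => simp; decide
  | succ n ih =>
    rw [pow_succ, Units.val_mul, ih]
    rw [show (↑Wl : Matrix (Fin 2) (Fin 2) (ZMod 13)) = !![1,0;6,1] from rfl,
      Matrix.mul_fin_two]
    ext a b
    fin_cases a <;> fin_cases b <;> push_cast <;> simp <;> ring

lemma hWdipow (n : ℕ) :
    (↑((Wd⁻¹) ^ n) : Matrix (Fin 2) (Fin 2) (ZMod 13)) = !![(2:ZMod 13)^n,0;0,(4:ZMod 13)^n] := by
  induction n with
  | zero => simp; decide
  | succ n ih =>
    rw [pow_succ, Units.val_mul, ih]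
    rw [show (↑(Wd⁻¹) : Matrix (Fin 2) (Fin 2) (ZMod 13)) = !![2,0;0,4] from rfl,
      Matrix.mul_fin_two]
    norm_num [pow_succ]

def P (M : Matrix (Fin 2) (Fin 2) (ZMod 13)) : Prop :=
  ∀ g : G, (↑g : Matrix (Fin 2) (Fin 2) (ZMod 13)) = M → (QuotientGroup.mk g : Q) ∈ H

lemma step_left (m : G) (hm : (QuotientGroup.mk m : Q) ∈ H)
    (N : Matrix (Fin 2) (Fin 2) (ZMod 13)) (hN : P N) :
    P ((↑m : Matrix (Fin 2) (Fin 2) (ZMod 13)) * N) := by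
  intro g hg
  have hn : (↑(m⁻¹ * g) : Matrix (Fin 2) (Fin 2) (ZMod 13)) = N := by
    rw [Units.val_mul, hg, ← mul_assoc, Units.inv_mul, one_mul]
  have : g = m * (m⁻¹ * g) := (mul_inv_cancel_left m g).symm
  rw [this, QuotientGroup.mk_mul]
  exact mul_mem hm (hN _ hn)

lemma step_right (m : G) (hm : (QuotientGroup.mk m : Q) ∈ H)
    (N : Matrix (Fin 2) (Fin 2) (ZMod 13)) (hN : P N) :
    P (N * (↑m : Matrix (Fin 2) (Fin 2) (ZMod 13))) := by
  intro g hg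
  have hn : (↑(g * m⁻¹) : Matrix (Fin 2) (Fin 2) (ZMod 13)) = N := by
    rw [Units.val_mul, hg, mul_assoc, Units.mul_inv, mul_one]
  have : g = (g * m⁻¹) * m := (inv_mul_cancel_right g m).symm
  rw [this, QuotientGroup.mk_mul]
  exact mul_mem (hN _ hn) hm

lemma trans_exists (t : TransvectionStruct (Fin 2) (ZMod 13)) :
    ∃ m : G, (↑m : Matrix (Fin 2) (Fin 2) (ZMod 13)) = t.toMatrix ∧
      (QuotientGroup.mk m : Q) ∈ H := by
  obtain ⟨i, j, hij, c⟩ := t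
  fin_cases i <;> fin_cases j
  · simp at hij
  · refine ⟨V ^ c.val, ?_, ?_⟩
    · rw [hVpow]
      have hc : ((c.val : ZMod 13)) = c := by simp [ZMod.natCast_val, ZMod.cast_id]
      ext a b
      fin_cases a <;> fin_cases b <;>
        simp [TransvectionStruct.toMatrix, Matrix.transvection, Matrix.single,
          Matrix.one_apply, hc]
    · rw [QuotientGroup.mk_pow]
      exact pow_mem hv _
  · refine ⟨Wl ^ (11 * c).val, ?_, ?_⟩
    · rw [hWlpow]
      have hc2 : (6 : ZMod 13) * (11 * c) = c := by
        calc (6 : ZMod 13) * (11 * c) = (6 * 11) * c := by ring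
          _ = 1 * c := by rw [show (6 * 11 : ZMod 13) = 1 from by decide]
          _ = c := one_mul c
      have hc : (6 : ZMod 13) * (((11 * c).val : ZMod 13)) = c := by
        rw [ZMod.natCast_val, ZMod.cast_id]; exact hc2
      ext a b
      fin_cases a <;> fin_cases b <;>
        simp [TransvectionStruct.toMatrix, Matrix.transvection, Matrix.single,
          Matrix.one_apply, hc, hc2]
    · rw [QuotientGroup.mk_pow]
      exact pow_mem hWlH _
  · simp at hij

lemma two_pow_surj : ∀ x : ZMod 13, x ≠ 0 → ∃ k : Fin 12, (2:ZMod 13) ^ (k : ℕ) = x := by decide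

lemma diag_P (D : Fin 2 → ZMod 13) : P (Matrix.diagonal D) := by
  intro g hg
  have hdet : IsUnit (Matrix.diagonal D).det := by
    rw [← hg]; exact (Matrix.isUnit_iff_isUnit_det _).mp g.isUnit
  rw [Matrix.det_diagonal, Fin.prod_univ_two] at hdet
  have had : D 0 * D 1 ≠ 0 := by
    intro h; rw [h] at hdet; exact not_isUnit_zero hdet
  have ha : D 0 ≠ 0 := fun h => had (by rw [h, zero_mul])
  have hd : D 1 ≠ 0 := fun h => had (by rw [h, mul_zero])
  obtain ⟨k, hk⟩ := two_pow_surj (D 0 * (D 1)⁻¹) (by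
    exact mul_ne_zero ha (inv_ne_zero hd))
  have key : (QuotientGroup.mk (Wd ^ (k:ℕ)) : Q) = QuotientGroup.mk g := by
    rw [QuotientGroup.eq]
    apply central_of_scalar ((2:ZMod 13)^(k:ℕ) * D 0)
    rw [Units.val_mul, ← inv_pow, hWdipow, hg]
    have hdiag : (Matrix.diagonal D) = !![D 0, 0; 0, D 1] := by
      ext a b; fin_cases a <;> fin_cases b <;> simp [Matrix.diagonal]
    rw [hdiag, Matrix.mul_fin_two]
    have h4 : (4:ZMod 13)^(k:ℕ) * D 1 = (2:ZMod 13)^(k:ℕ) * D 0 := by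
      have : (4:ZMod 13) = 2 * 2 := by decide
      rw [this, mul_pow, hk]
      field_simp
    rw [h4]
    ext a b; fin_cases a <;> fin_cases b <;> simp [Matrix.smul_apply, Matrix.one_apply]
  have : (QuotientGroup.mk (Wd ^ (k:ℕ)) : Q) ∈ H := by
    rw [show ((QuotientGroup.mk (Wd ^ (k:ℕ))) : Q)
        = (QuotientGroup.mk Wd : Q) ^ (k:ℕ) from rfl]
    exact pow_mem hWdH _
  rwa [key] at this

lemma listP (L : List (TransvectionStruct (Fin 2) (ZMod 13)))
    (N : Matrix (Fin 2) (Fin 2) (ZMod 13)) (hN : P N) :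
    P ((L.map TransvectionStruct.toMatrix).prod * N) := by
  induction L with
  | nil => rw [List.map_nil, List.prod_nil, one_mul]; exact hN
  | cons t L ih =>
    obtain ⟨m, hm1, hm2⟩ := trans_exists t
    rw [List.map_cons, List.prod_cons, mul_assoc, ← hm1]
    exact step_left m hm2 _ ih

lemma rlistP (L : List (TransvectionStruct (Fin 2) (ZMod 13))) :
    ∀ N : Matrix (Fin 2) (Fin 2) (ZMod 13), P N →
    P (N * (L.map TransvectionStruct.toMatrix).prod) := by
  induction L with
  | nil => intro N hN; rw [List.map_nil, List.prod_nil, mul_one]; exact hN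
  | cons t L ih =>
    intro N hN
    obtain ⟨m, hm1, hm2⟩ := trans_exists t
    rw [List.map_cons, List.prod_cons, ← mul_assoc, ← hm1]
    exact ih _ (step_right m hm2 N hN)

lemma all_mem (A : G) : (QuotientGroup.mk A : Q) ∈ H := by
  obtain ⟨L, L', D, hD⟩ :=
    Matrix.Pivot.exists_list_transvec_mul_diagonal_mul_list_transvec
      (↑A : Matrix (Fin 2) (Fin 2) (ZMod 13))
  exact rlistP L' _ (listP L _ (diag_P D)) A hD

end Stmt12Aux

open Stmt12Aux
theorem stmt12 :
    ∃ u v : GL (Fin 2) (ZMod 13) ⧸ Subgroup.center (GL (Fin 2) (ZMod 13)),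
      u ^ 2 = 1 ∧ v ^ 13 = 1 ∧ (u * v ^ 2) ^ 4 = 1 ∧ (u * v * u * v ^ 4) ^ 2 = 1 ∧
        Subgroup.closure ({u, v} : Set _) = ⊤ := by
  refine ⟨Stmt12Aux.u, Stmt12Aux.v, ?_, ?_, ?_, ?_, ?_⟩
  · show (QuotientGroup.mk U : Q) ^ 2 = 1
    rw [← QuotientGroup.mk_pow, QuotientGroup.eq_one_iff]
    exact central_of_scalar 6 _ (by rw [Units.val_pow_eq_pow_val]; decide)
  · show (QuotientGroup.mk V : Q) ^ 13 = 1
    rw [← QuotientGroup.mk_pow, QuotientGroup.eq_one_iff]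
    exact central_of_scalar 1 _ (by rw [Units.val_pow_eq_pow_val]; decide)
  · show ((QuotientGroup.mk U : Q) * (QuotientGroup.mk V : Q) ^ 2) ^ 4 = 1
    rw [← QuotientGroup.mk_pow, ← QuotientGroup.mk_mul, ← QuotientGroup.mk_pow,
      QuotientGroup.eq_one_iff]
    exact central_of_scalar 3 _ (by
      simp only [Units.val_pow_eq_pow_val, Units.val_mul]; decide)
  · show ((QuotientGroup.mk U : Q) * (QuotientGroup.mk V : Q) * (QuotientGroup.mk U : Q)
        * (QuotientGroup.mk V : Q) ^ 4) ^ 2 = 1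
    rw [← QuotientGroup.mk_pow, ← QuotientGroup.mk_mul, ← QuotientGroup.mk_mul,
      ← QuotientGroup.mk_mul, ← QuotientGroup.mk_pow, QuotientGroup.eq_one_iff]
    exact central_of_scalar 3 _ (by
      simp only [Units.val_pow_eq_pow_val, Units.val_mul]; decide)
  · rw [eq_top_iff]
    intro x _
    induction x using QuotientGroup.induction_on with
    | _ A => exact all_mem A
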